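/- Fix real numbers ε > 0 and L > 0, and define F : ℝ² → ℝ² by F(θ, φ) = ( π/2 − θ − φ , (ε/L)·( (1 − cos θ)/tan(π/2 − θ − φ) + sin θ ) ). Then at every point (θ, φ) with θ ∈ (0, π/2) and α := π/2 − θ − φ ∈ (0, π/2), the map F is differentiable and the determinant of its derivative satisfies det DF(θ, φ) · sin(π/2 − θ − φ) = (ε/L) · cos φ; equivalently det DF(θ,φ) = (ε/L)·cos φ / sin(π/2 − θ − φ). Consequently the measure (L/(4πε))·sin α · dα ∧ dz equals (1/(4π))·cos φ · dθ ∧ dφ under the change of variables (α, z) = F(θ, φ). -/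

import Mathlib

/-- Lemma C.3 of the paper (change to corridor coordinates): for
`F(θ,φ) = (π/2 - θ - φ, (ε/L)((1 - cos θ)/tan(π/2 - θ - φ) + sin θ))`, at every point
with `θ ∈ (0,π/2)` and `α = π/2 - θ - φ ∈ (0,π/2)`, `F` is differentiable and
`det DF(θ,φ) · sin(π/2 - θ - φ) = (ε/L) cos φ`; equivalently
`det DF(θ,φ) = (ε/L) cos φ / sin(π/2 - θ - φ)`. Consequently
`(L/(4πε)) sin α dα dz = (1/(4π)) cos φ dθ dφ` under `(α,z) = F(θ,φ)`. -/
theorem corridor_volume_form (ε L : ℝ) (hε : 0 < ε) (hL : 0 < L)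
    (F : ℝ × ℝ → ℝ × ℝ)
    (hF : ∀ x : ℝ × ℝ, F x =
      (Real.pi / 2 - x.1 - x.2,
        (ε / L) * ((1 - Real.cos x.1) / Real.tan (Real.pi / 2 - x.1 - x.2) + Real.sin x.1)))
    (θ φ : ℝ) (hθ : θ ∈ Set.Ioo 0 (Real.pi / 2))
    (hα : Real.pi / 2 - θ - φ ∈ Set.Ioo 0 (Real.pi / 2)) :
    DifferentiableAt ℝ F (θ, φ) ∧
    LinearMap.det ((fderiv ℝ F (θ, φ)) : ℝ × ℝ →ₗ[ℝ] ℝ × ℝ) * Real.sin (Real.pi / 2 - θ - φ)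
        = (ε / L) * Real.cos φ ∧
    LinearMap.det ((fderiv ℝ F (θ, φ)) : ℝ × ℝ →ₗ[ℝ] ℝ × ℝ)
        = (ε / L) * Real.cos φ / Real.sin (Real.pi / 2 - θ - φ) := by
  obtain ⟨hθ0, hθ1⟩ := hθ
  obtain ⟨hα0, hα1⟩ := hα
  set α : ℝ := Real.pi / 2 - θ - φ with hαdef
  clear_value α
  have hpi := Real.pi_pos
  have hsinα : 0 < Real.sin α := Real.sin_pos_of_pos_of_lt_pi hα0 (by linarith)
  have hcosα : 0 < Real.cos α := Real.cos_pos_of_mem_Ioo ⟨by linarith, hα1⟩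
  have htanα : Real.tan α ≠ 0 := by
    rw [Real.tan_eq_sin_div_cos]
    exact ne_of_gt (div_pos hsinα hcosα)
  set p : ℝ × ℝ := (θ, φ) with hp
  set g : ℝ × ℝ → ℝ := fun x => Real.pi / 2 - x.1 - x.2 with hg
  have hFfun : F = fun x =>
      (g x, (ε / L) * ((1 - Real.cos x.1) * (Real.tan (g x))⁻¹ + Real.sin x.1)) := by
    funext x
    rw [hF x]
    simp [hg, div_eq_mul_inv]
  set Lg : ℝ × ℝ →L[ℝ] ℝ :=
    -(ContinuousLinearMap.fst ℝ ℝ ℝ) - ContinuousLinearMap.snd ℝ ℝ ℝ with hLg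
  have hgd : HasFDerivAt g Lg p := by
    have h1 : HasFDerivAt (fun x : ℝ × ℝ => x.1) (ContinuousLinearMap.fst ℝ ℝ ℝ) p :=
      hasFDerivAt_fst
    have h2 : HasFDerivAt (fun x : ℝ × ℝ => x.2) (ContinuousLinearMap.snd ℝ ℝ ℝ) p :=
      hasFDerivAt_snd
    exact (h1.const_sub (Real.pi / 2)).sub h2

  have hu : HasFDerivAt (fun x : ℝ × ℝ => 1 - Real.cos x.1)
      (Real.sin θ • ContinuousLinearMap.fst ℝ ℝ ℝ) p := by
    have hc : HasFDerivAt (fun x : ℝ × ℝ => Real.cos x.1)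
        ((-Real.sin θ) • ContinuousLinearMap.fst ℝ ℝ ℝ) p :=
      (Real.hasDerivAt_cos θ).comp_hasFDerivAt (h₂ := Real.cos) p
        (hasFDerivAt_fst : HasFDerivAt _ (ContinuousLinearMap.fst ℝ ℝ ℝ) p)
    have h := hc.const_sub (1 : ℝ)
    rwa [← neg_smul, neg_neg] at h
  have hgp : α = g p := hαdef
  have hq : HasFDerivAt (fun x => (Real.tan (g x))⁻¹)
      ((-(1 / Real.cos α ^ 2) / Real.tan α ^ 2) • Lg) p := by
    have htand : HasDerivAt (fun t => (Real.tan t)⁻¹)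
        (-(1 / Real.cos α ^ 2) / Real.tan α ^ 2) α :=
      (Real.hasDerivAt_tan hcosα.ne').inv htanα
    exact htand.comp_hasFDerivAt_of_eq p hgd hgp
  have hmul := hu.mul hq
  have hsin1 : HasFDerivAt (fun x : ℝ × ℝ => Real.sin x.1)
      (Real.cos θ • ContinuousLinearMap.fst ℝ ℝ ℝ) p :=
    (Real.hasDerivAt_sin θ).comp_hasFDerivAt (h₂ := Real.sin) p
      (hasFDerivAt_fst : HasFDerivAt _ (ContinuousLinearMap.fst ℝ ℝ ℝ) p)
  have hF2 := (hmul.add hsin1).const_mul (ε / L)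
  have hFd := hgd.prodMk hF2
  simp only [Pi.mul_apply, Pi.add_apply] at hFd
  rw [← hFfun] at hFd
  have hdiff : DifferentiableAt ℝ F (θ, φ) := hFd.differentiableAt
  have hfd := hFd.fderiv
  rw [← hgp] at hfd
  have hdet : LinearMap.det ((fderiv ℝ F (θ, φ)) : ℝ × ℝ →ₗ[ℝ] ℝ × ℝ)
      = (ε / L) * ((Real.tan α)⁻¹ * Real.sin θ + Real.cos θ) := by
    rw [show ((θ, φ) : ℝ × ℝ) = p from rfl, hfd,
      ← LinearMap.det_toMatrix (Module.Basis.finTwoProd ℝ), Matrix.det_fin_two]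
    simp only [LinearMap.toMatrix_apply, Module.Basis.finTwoProd_zero, Module.Basis.finTwoProd_one,
      Module.Basis.coe_finTwoProd_repr, ContinuousLinearMap.coe_coe, ContinuousLinearMap.prod_apply,
      ContinuousLinearMap.add_apply, ContinuousLinearMap.smul_apply,
      ContinuousLinearMap.sub_apply, ContinuousLinearMap.neg_apply, hLg,
      ContinuousLinearMap.coe_fst', ContinuousLinearMap.coe_snd', smul_eq_mul,
      Matrix.cons_val_zero, Matrix.cons_val_one, Matrix.head_cons]
    ring
  have key : LinearMap.det ((fderiv ℝ F (θ, φ)) : ℝ × ℝ →ₗ[ℝ] ℝ × ℝ)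
      * Real.sin α = (ε / L) * Real.cos φ := by
    rw [hdet]
    have hφ : Real.cos φ = Real.sin (α + θ) := by
      rw [show α + θ = Real.pi / 2 - φ by rw [hαdef]; ring, Real.sin_pi_div_two_sub]
    rw [hφ, Real.sin_add, Real.tan_eq_sin_div_cos]
    field_simp
    ring
  exact ⟨hdiff, key, by
    rw [eq_div_iff hsinα.ne']
    exact key⟩
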